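/- (Example 4.2) In ℝ⁴ with x = (x₁, x₂, x₃, x₄), let φ(x) = (1/4)x₁ − x₁x₂ + x₃ + x₃² + (1/12)x₄⁴, and let Γ := {x ∈ ℝ⁴ : x₁ − x₃ ≤ 0, −x₁ − x₃ ≤ 0, x₂ − 2x₃ ≤ 0, −x₂ − 2x₃ ≤ 0, −x₁ + x₂² ≤ 0, −x₁ ≤ 0, −x₁ + x₂² + x₂ = 0}. Then x̄ := (0,0,0,0) is a stationary point of the NLP: minimize φ(x) subject to x ∈ Γ, but x̄ is NOT a tilt-stable local minimizer of this NLP. -/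

import Mathlib

open Filter Topology Metric Set
open scoped RealInnerProductSpace

noncomputable section

/-- The Bouligand (contingent) tangent cone to `s` at `x`. -/
def BCone {V : Type*} [NormedAddCommGroup V] [NormedSpace ℝ V] (s : Set V) (x : V) : Set V :=
  {u | ∃ (t : ℕ → ℝ) (c : ℕ → V), (∀ k, 0 < t k) ∧ Filter.Tendsto t Filter.atTop (𝓝 0) ∧
    Filter.Tendsto c Filter.atTop (𝓝 u) ∧ ∀ k, x + t k • c k ∈ s}

/-- The (convex) normal cone to `K` at `w`; empty when `w ∉ K`. -/
def NCone {V : Type*} [NormedAddCommGroup V] [InnerProductSpace ℝ V] (K : Set V) (w : V) :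
    Set V :=
  {z | w ∈ K ∧ ∀ y ∈ K, ⟪z, y - w⟫ ≤ 0}

variable {n : ℕ} {ι : Type*} [Fintype ι] [DecidableEq ι]

/-- The feasible set `Γ` of the nonlinear program. -/
def Feas (E I : Finset ι) (q : ι → EuclideanSpace ℝ (Fin n) → ℝ) :
    Set (EuclideanSpace ℝ (Fin n)) :=
  {x | (∀ i ∈ E, q i x = 0) ∧ ∀ i ∈ I, q i x ≤ 0}

/-- The set of active inequality constraints at `x`. -/
def ActiveI (I : Finset ι) (q : ι → EuclideanSpace ℝ (Fin n) → ℝ)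
    (x : EuclideanSpace ℝ (Fin n)) : Finset ι :=
  I.filter fun i => q i x = 0

/-- The Lagrange multiplier set `Λ(x, x*)`. -/
def Mult (I : Finset ι) (q : ι → EuclideanSpace ℝ (Fin n) → ℝ)
    (x xs : EuclideanSpace ℝ (Fin n)) : Set (EuclideanSpace ℝ ι) :=
  {lam | ∑ i, lam i • gradient (q i) x = xs ∧ ∀ i ∈ I, 0 ≤ lam i ∧ lam i * q i x = 0}

/-- `I⁺(λ)`: the inequality indices with positive multiplier. -/
def IplusF (I : Finset ι) (lam : EuclideanSpace ℝ ι) : Finset ι :=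
  I.filter fun i => 0 < lam i

/-- `I⁺(x, x*) = ∪_{λ ∈ Λ(x,x*)} I⁺(λ)`. -/
def IplusSet (I : Finset ι) (q : ι → EuclideanSpace ℝ (Fin n) → ℝ)
    (x xs : EuclideanSpace ℝ (Fin n)) : Set ι :=
  {i | ∃ lam ∈ Mult I q x xs, i ∈ IplusF I lam}

/-- Rank of the family of gradients `{∇q_i(x) : i ∈ s}`. -/
def RankAt (q : ι → EuclideanSpace ℝ (Fin n) → ℝ) (s : Finset ι)
    (x : EuclideanSpace ℝ (Fin n)) : ℕ :=
  Module.finrank ℝ (Submodule.span ℝ ((fun i => gradient (q i) x) '' ↑s))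

/-- The relaxed constant rank constraint qualification at `xbar`. -/
def RCRCQat (E I : Finset ι) (q : ι → EuclideanSpace ℝ (Fin n) → ℝ)
    (xbar : EuclideanSpace ℝ (Fin n)) : Prop :=
  ∃ U ∈ 𝓝 xbar, ∀ J ⊆ ActiveI I q xbar, ∀ x ∈ U, ∀ y ∈ U,
    RankAt q (E ∪ J) x = RankAt q (E ∪ J) y

/-- The set `Θ = {0}^E × ℝ₋^I`. -/
def Theta (E I : Finset ι) : Set (EuclideanSpace ℝ ι) :=
  {y | (∀ i ∈ E, y i = 0) ∧ ∀ i ∈ I, y i ≤ 0}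

/-- The metric subregularity constraint qualification at `x` with modulus `κ`. -/
def MSCQat (E I : Finset ι) (q : ι → EuclideanSpace ℝ (Fin n) → ℝ)
    (x : EuclideanSpace ℝ (Fin n)) (κ : ℝ) : Prop :=
  ∃ U ∈ 𝓝 x, ∀ u ∈ U,
    Metric.infDist u (Feas E I q) ≤
      κ * Metric.infDist (show EuclideanSpace ℝ ι from WithLp.toLp 2 fun i => q i u) (Theta E I)

/-- The critical cone `K(x, x*) = T_Γ(x) ∩ {x*}^⊥`. -/
def Crit (E I : Finset ι) (q : ι → EuclideanSpace ℝ (Fin n) → ℝ)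
    (x xs : EuclideanSpace ℝ (Fin n)) : Set (EuclideanSpace ℝ (Fin n)) :=
  BCone (Feas E I q) x ∩ {v | ⟪xs, v⟫ = 0}

/-- Hessian of `f` at `x` applied to `w` (derivative of the gradient map). -/
def HessApp (f : EuclideanSpace ℝ (Fin n) → ℝ) (x w : EuclideanSpace ℝ (Fin n)) :
    EuclideanSpace ℝ (Fin n) :=
  fderiv ℝ (fun y => gradient f y) x w

/-- `∇²⟨λ, q⟩(x) w = Σ_i λ_i ∇²q_i(x) w`. -/
def HessComb (q : ι → EuclideanSpace ℝ (Fin n) → ℝ) (lam : EuclideanSpace ℝ ι)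
    (x w : EuclideanSpace ℝ (Fin n)) : EuclideanSpace ℝ (Fin n) :=
  ∑ i, lam i • HessApp (q i) x w

/-- The quadratic form `⟨v, ∇²⟨λ,q⟩(x) v⟩`. -/
def QuadComb (q : ι → EuclideanSpace ℝ (Fin n) → ℝ) (lam : EuclideanSpace ℝ ι)
    (x v : EuclideanSpace ℝ (Fin n)) : ℝ :=
  ⟪v, HessComb q lam x v⟫

/-- `Λ(x, x*; v)`: the argmax of the quadratic form over `Λ(x, x*)`. -/
def MultArgmax (I : Finset ι) (q : ι → EuclideanSpace ℝ (Fin n) → ℝ)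
    (x xs v : EuclideanSpace ℝ (Fin n)) : Set (EuclideanSpace ℝ ι) :=
  {lam ∈ Mult I q x xs | ∀ mu ∈ Mult I q x xs, QuadComb q mu x v ≤ QuadComb q lam x v}

/-- The set `G = {(u, u*) : u ∈ Γ, Λ(u, u*) ≠ ∅}`. -/
def GSet (E I : Finset ι) (q : ι → EuclideanSpace ℝ (Fin n) → ℝ) :
    Set (EuclideanSpace ℝ (Fin n) × EuclideanSpace ℝ (Fin n)) :=
  {p | p.1 ∈ Feas E I q ∧ (Mult I q p.1 p.2).Nonempty}

/-- Argmin set of the tilted problem `M_γ(v)`. -/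
def MArgmin (φ : EuclideanSpace ℝ (Fin n) → ℝ) (Γ : Set (EuclideanSpace ℝ (Fin n)))
    (xbar : EuclideanSpace ℝ (Fin n)) (γ : ℝ) (v : EuclideanSpace ℝ (Fin n)) :
    Set (EuclideanSpace ℝ (Fin n)) :=
  {x ∈ Γ ∩ Metric.closedBall xbar γ |
    ∀ y ∈ Γ ∩ Metric.closedBall xbar γ, φ x - ⟪v, x⟫ ≤ φ y - ⟪v, y⟫}

/-- Tilt-stable local minimizer with modulus `κ`. -/
def TiltStableWith (φ : EuclideanSpace ℝ (Fin n) → ℝ) (Γ : Set (EuclideanSpace ℝ (Fin n)))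
    (xbar : EuclideanSpace ℝ (Fin n)) (κ : ℝ) : Prop :=
  ∃ γ > (0:ℝ), ∃ W ∈ 𝓝 (0 : EuclideanSpace ℝ (Fin n)),
    ∃ m : EuclideanSpace ℝ (Fin n) → EuclideanSpace ℝ (Fin n),
      m 0 = xbar ∧ (∀ v ∈ W, MArgmin φ Γ xbar γ v = {m v}) ∧
      ∀ v₁ ∈ W, ∀ v₂ ∈ W, ‖m v₁ - m v₂‖ ≤ κ * ‖v₁ - v₂‖

/-- Tilt-stable local minimizer. -/
def TiltStable (φ : EuclideanSpace ℝ (Fin n) → ℝ) (Γ : Set (EuclideanSpace ℝ (Fin n)))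
    (xbar : EuclideanSpace ℝ (Fin n)) : Prop :=
  ∃ κ > (0:ℝ), TiltStableWith φ Γ xbar κ

/-- The exact bound of tilt stability. -/
def TiltBound (φ : EuclideanSpace ℝ (Fin n) → ℝ) (Γ : Set (EuclideanSpace ℝ (Fin n)))
    (xbar : EuclideanSpace ℝ (Fin n)) : ℝ :=
  sInf {κ : ℝ | 0 < κ ∧ TiltStableWith φ Γ xbar κ}


/-- The constraint functions of Example 4.2: `q₁,…,q₆` are inequality constraints (indices
`0,…,5`) and `q₇` (index `6`) is the equality constraint. -/
def qEx : Fin 7 → EuclideanSpace ℝ (Fin 4) → ℝ :=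
  ![fun x => x 0 - x 2,
    fun x => -x 0 - x 2,
    fun x => x 1 - 2 * x 2,
    fun x => -x 1 - 2 * x 2,
    fun x => -x 0 + x 1 ^ 2,
    fun x => -x 0,
    fun x => -x 0 + x 1 ^ 2 + x 1]

/-- The objective of Example 4.2. -/
def φEx2 : EuclideanSpace ℝ (Fin 4) → ℝ :=
  fun x => (1 / 4) * x 0 - x 0 * x 1 + x 2 + x 2 ^ 2 + (1 / 12) * x 3 ^ 4


namespace Ex42Aux

abbrev E4 := EuclideanSpace ℝ (Fin 4)

def pj (i : Fin 4) : E4 →L[ℝ] ℝ := EuclideanSpace.proj i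

lemma hasGradientAt_of (f : E4 → ℝ) (L : E4 →L[ℝ] ℝ) (a x : E4)
    (h : HasFDerivAt f L x) (he : ∀ y, L y = ⟪a, y⟫) : HasGradientAt f a x := by
  rw [hasGradientAt_iff_hasFDerivAt]
  have hL : (InnerProductSpace.toDual ℝ E4) a = L :=
    ContinuousLinearMap.ext fun y => by simp [he y]
  rw [hL]; exact h

lemma grad0 : HasGradientAt (fun x : E4 => x 0 - x 2)
    (show E4 from WithLp.toLp 2 (![1,0,-1,0] : Fin 4 → ℝ)) 0 := by
  refine hasGradientAt_of _ (pj 0 - pj 2) _ _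
      (((pj 0).hasFDerivAt (x := 0)).sub ((pj 2).hasFDerivAt)) ?_
  intro y
  simp [pj, PiLp.inner_apply, Fin.sum_univ_four]
  ring

lemma grad1 : HasGradientAt (fun x : E4 => -x 0 - x 2)
    (show E4 from WithLp.toLp 2 (![-1,0,-1,0] : Fin 4 → ℝ)) 0 := by
  refine hasGradientAt_of _ (-pj 0 - pj 2) _ _
      ((((pj 0).hasFDerivAt (x := 0)).neg).sub ((pj 2).hasFDerivAt)) ?_
  intro y
  simp [pj, PiLp.inner_apply, Fin.sum_univ_four]
  ring

lemma gradPhi : HasGradientAt φEx2 (show E4 from WithLp.toLp 2 (![1/4,0,1,0] : Fin 4 → ℝ)) 0 := by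
  have t1 := ((pj 0).hasFDerivAt (x := (0:E4))).const_mul ((1:ℝ)/4)
  have t2 := ((pj 0).hasFDerivAt (x := (0:E4))).mul ((pj 1).hasFDerivAt)
  have t3 := (pj 2).hasFDerivAt (x := (0:E4))
  have t4 := (hasDerivAt_pow 2 ((0:E4) 2)).comp_hasFDerivAt 0 ((pj 2).hasFDerivAt)
  have t5 := ((hasDerivAt_pow 4 ((0:E4) 3)).comp_hasFDerivAt 0
      ((pj 3).hasFDerivAt)).const_mul ((1:ℝ)/12)
  have h := (((t1.sub t2).add t3).add t4).add t5
  refine hasGradientAt_of _ _ _ _ h ?_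
  intro y
  simp [pj, PiLp.inner_apply, Fin.sum_univ_four]
  ring

lemma feas_shift (x : E4) (c : ℝ)
    (hx : x ∈ Feas ({6} : Finset (Fin 7)) ({0, 1, 2, 3, 4, 5} : Finset (Fin 7)) qEx) :
    x + c • EuclideanSpace.single (3 : Fin 4) (1:ℝ) ∈
      Feas ({6} : Finset (Fin 7)) ({0, 1, 2, 3, 4, 5} : Finset (Fin 7)) qEx := by
  obtain ⟨h1, h2⟩ := hx
  have e : ∀ i : Fin 7, qEx i (x + c • EuclideanSpace.single (3 : Fin 4) (1:ℝ)) = qEx i x := by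
    intro i
    fin_cases i <;>
      simp [qEx, EuclideanSpace.single_apply]
  refine ⟨fun i hi => ?_, fun i hi => ?_⟩
  · rw [e i]; exact h1 i hi
  · rw [e i]; exact h2 i hi

end Ex42Aux

/-- **Example 4.2.** `x̄ = 0` is a stationary point of (NLP2) but not a tilt-stable local
minimizer. -/
theorem example42_not_tilt_stable :
    (0 : EuclideanSpace ℝ (Fin 4)) ∈
        Feas ({6} : Finset (Fin 7)) ({0, 1, 2, 3, 4, 5} : Finset (Fin 7)) qEx ∧
    (Mult ({0, 1, 2, 3, 4, 5} : Finset (Fin 7)) qEx 0 (-gradient φEx2 0)).Nonempty ∧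
    ¬ TiltStable φEx2
        (Feas ({6} : Finset (Fin 7)) ({0, 1, 2, 3, 4, 5} : Finset (Fin 7)) qEx) 0 := by
  have hfeas : (0 : EuclideanSpace ℝ (Fin 4)) ∈
      Feas ({6} : Finset (Fin 7)) ({0, 1, 2, 3, 4, 5} : Finset (Fin 7)) qEx := by
    constructor
    · intro i hi
      fin_cases hi <;> simp [qEx]
    · intro i hi
      fin_cases hi <;> simp [qEx]
  refine ⟨hfeas, ?_, ?_⟩
  · -- stationarity: exhibit multipliers
    refine ⟨(show EuclideanSpace ℝ (Fin 7) from WithLp.toLp 2 (![3/8, 5/8, 0, 0, 0, 0, 0] : Fin 7 → ℝ)), ?_, ?_⟩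
    · rw [Fin.sum_univ_seven]
      have g0 : gradient (qEx 0) 0 = (show Ex42Aux.E4 from WithLp.toLp 2 (![1,0,-1,0] : Fin 4 → ℝ)) :=
        Ex42Aux.grad0.gradient
      have g1 : gradient (qEx 1) 0 = (show Ex42Aux.E4 from WithLp.toLp 2 (![-1,0,-1,0] : Fin 4 → ℝ)) :=
        Ex42Aux.grad1.gradient
      have gφ : gradient φEx2 0 = (show Ex42Aux.E4 from WithLp.toLp 2 (![1/4,0,1,0] : Fin 4 → ℝ)) :=
        Ex42Aux.gradPhi.gradient
      show (3/8 : ℝ) • gradient (qEx 0) 0 + (5/8 : ℝ) • gradient (qEx 1) 0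
          + (0:ℝ) • _ + (0:ℝ) • _ + (0:ℝ) • _ + (0:ℝ) • _ + (0:ℝ) • _ = -gradient φEx2 0
      rw [g0, g1, gφ]
      ext j
      fin_cases j <;>
        norm_num [PiLp.add_apply, PiLp.smul_apply, PiLp.neg_apply]
    · intro i hi
      fin_cases hi <;>
        norm_num [qEx, Matrix.vecHead, Matrix.vecTail, Matrix.cons_val_succ,
          show ((![3/8, 5/8, 0, 0, 0, 0, (0:ℝ)]) 5 : ℝ) = 0 from rfl] <;> simp [qEx]
  · -- not tilt stable
    rintro ⟨κ, hκ, γ, hγ, W, hW, m, hm0, hms, hlip⟩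
    obtain ⟨ε, hε, hball⟩ := Metric.mem_nhds_iff.1 hW
    set r : ℝ := min (min 1 (ε/2)) (min (γ/2) (1/κ)) with hrdef
    have hr0 : 0 < r := lt_min (lt_min one_pos (by positivity)) (lt_min (by positivity) (by positivity))
    have hr1 : r ≤ 1 := le_trans (min_le_left _ _) (min_le_left _ _)
    have hrε : r ≤ ε/2 := le_trans (min_le_left _ _) (min_le_right _ _)
    have hrγ : r ≤ γ/2 := le_trans (min_le_right _ _) (min_le_left _ _)
    have hrκ : κ * r ≤ 1 := by
      have : r ≤ 1/κ := le_trans (min_le_right _ _) (min_le_right _ _)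
      rw [le_div_iff₀ hκ] at this
      linarith
    set t : ℝ := r^3/3 with htdef
    have ht0 : 0 < t := by positivity
    set v : EuclideanSpace ℝ (Fin 4) := t • EuclideanSpace.single (3 : Fin 4) (1:ℝ) with hvdef
    have hvnorm : ‖v‖ = t := by
      rw [hvdef, norm_smul, EuclideanSpace.norm_single]
      simp [abs_of_pos ht0]
    have hr3 : r^3 ≤ r := by nlinarith [hr0, hr1, sq_nonneg r]
    have hvW : v ∈ W := by
      apply hball
      rw [Metric.mem_ball, dist_zero_right, hvnorm, htdef]
      linarith [hr3, hrε, hε]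
    have h0W : (0 : EuclideanSpace ℝ (Fin 4)) ∈ W := mem_of_mem_nhds hW
    have hxmem : m v ∈ MArgmin φEx2
        (Feas ({6} : Finset (Fin 7)) ({0, 1, 2, 3, 4, 5} : Finset (Fin 7)) qEx) 0 γ v := by
      rw [hms v hvW]; rfl
    obtain ⟨⟨hxΓ, hxball⟩, hopt⟩ := hxmem
    have hlipv : ‖m v‖ ≤ κ * t := by
      have := hlip v hvW 0 h0W
      rwa [hm0, sub_zero, sub_zero, hvnorm] at this
    set s : ℝ := m v 3 with hsdef
    have habs : |s| ≤ ‖m v‖ := by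
      have h1 : ⟪EuclideanSpace.single (3 : Fin 4) (1:ℝ), m v⟫ = s := by
        simp [EuclideanSpace.inner_single_left, hsdef]
      have h2 := abs_real_inner_le_norm (EuclideanSpace.single (3 : Fin 4) (1:ℝ)) (m v)
      rw [h1, EuclideanSpace.norm_single] at h2
      simpa using h2
    have hκt : κ * t ≤ r/3 := by
      rw [htdef]
      nlinarith [sq_nonneg r, hr0, hr1, hrκ, mul_pos hr0 hr0]
    have hsle : s ≤ r/3 :=
      le_trans (le_trans (le_abs_self s) (habs.trans hlipv)) hκt
    set y : EuclideanSpace ℝ (Fin 4) :=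
      m v + (r - s) • EuclideanSpace.single (3 : Fin 4) (1:ℝ) with hydef
    have hyΓ := Ex42Aux.feas_shift (m v) (r - s) hxΓ
    have hynorm : ‖y‖ ≤ ‖m v‖ + |r - s| := by
      calc ‖y‖ ≤ ‖m v‖ + ‖(r - s) • EuclideanSpace.single (3 : Fin 4) (1:ℝ)‖ :=
            norm_add_le _ _
        _ = ‖m v‖ + |r - s| := by rw [norm_smul, EuclideanSpace.norm_single]; simp
    have hsbounds := abs_le.1 (habs.trans hlipv)
    have hyball : y ∈ Metric.closedBall (0 : EuclideanSpace ℝ (Fin 4)) γ := by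
      rw [Metric.mem_closedBall, dist_zero_right]
      have h1 : |r - s| = r - s := abs_of_nonneg (by linarith [hsle, hr0])
      rw [h1] at hynorm
      linarith [hynorm, hlipv, hκt, hsbounds.1, hrγ, hr0]
    have hkey := hopt y ⟨hyΓ, hyball⟩
    -- coordinates of y
    have ey0 : y 0 = m v 0 := by simp [hydef, EuclideanSpace.single_apply]
    have ey1 : y 1 = m v 1 := by simp [hydef, EuclideanSpace.single_apply]
    have ey2 : y 2 = m v 2 := by simp [hydef, EuclideanSpace.single_apply]
    have ey3 : y 3 = r := by simp [hydef, EuclideanSpace.single_apply, hsdef]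
    have eφ : φEx2 y = φEx2 (m v) - (1/12) * s^4 + (1/12) * r^4 := by
      simp only [φEx2, ey0, ey1, ey2, ey3, hsdef]
      ring
    have einner : ∀ x : EuclideanSpace ℝ (Fin 4), ⟪v, x⟫ = t * x 3 := by
      intro x
      rw [hvdef, real_inner_smul_left, EuclideanSpace.inner_single_left]
      simp
    have hineq : (1/12) * s^4 - t * s ≤ (1/12) * r^4 - t * r := by
      have h1 := hkey
      rw [eφ, einner y, einner (m v), ey3, ← hsdef] at h1
      linarith
    have hs4 : 0 ≤ s^4 := by positivity
    rw [htdef] at hineq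
    have hprod : r^3 * s ≤ r^3 * (r/3) :=
      mul_le_mul_of_nonneg_left hsle (pow_pos hr0 3).le
    linarith [hineq, hs4, hprod, pow_pos hr0 4]


end
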